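/- Let F : ℝ^d → ℝ (d ≥ 1) be a convex function that is finite on all of ℝ^d and differentiable at 0, with m := ∇F(0). Define bar F(p) := max_{|ℓ|=1} F(pℓ) for p ≥ 0 (and +∞ for p < 0) and ubar(F*)(r) := inf_{|ℓ|=1} F*(rℓ) for r ≥ 0 (and +∞ for r < 0), where F* is the Legendre–Fenchel conjugate of F. Then: (i) bar F is increasing and convex on [0, ∞); (ii) (ubar(F*))*(p) = bar F(p) for all p ≥ 0; and (iii) for every r ≥ |m|, the largest convex minorant of ubar(F*) satisfies (conv ubar(F*))(r) = (bar F)*(r). -/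

import Mathlib

open Set Filter
open scoped ENNReal NNReal RealInnerProductSpace Topology

noncomputable section

/-- Euclidean space `ℝ^d`. -/
abbrev Ed (d : ℕ) : Type := EuclideanSpace ℝ (Fin d)

/-- The Legendre–Fenchel conjugate `F*(v) = sup_u (u·v − F(u))` of a finite function `F`,
with values in `EReal` (`F*` may take the value `+∞`). -/
def conjE {d : ℕ} (F : Ed d → ℝ) (v : Ed d) : EReal :=
  ⨆ u : Ed d, ((⟪u, v⟫ - F u : ℝ) : EReal)

/-- The radial minimum `ubar G(r) = inf_{|ℓ|=1} G(rℓ)` of `G`, set to `+∞` for `r < 0`. -/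
def ubarE {d : ℕ} (G : Ed d → EReal) (r : ℝ) : EReal :=
  if r < 0 then ⊤ else ⨅ ℓ ∈ {ℓ : Ed d | ‖ℓ‖ = 1}, G (r • ℓ)

/-- The radial maximum `bar F(p) = max_{|ℓ|=1} F(pℓ)` of a finite function `F`. -/
def barE {d : ℕ} (F : Ed d → ℝ) (p : ℝ) : ℝ :=
  sSup ((fun ℓ : Ed d => F (p • ℓ)) '' {ℓ : Ed d | ‖ℓ‖ = 1})

/-- The Legendre–Fenchel conjugate `g*(p) = sup_r (pr − g(r))` of an `EReal`-valued
function of a real variable. -/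
def conj1E (g : ℝ → EReal) (p : ℝ) : EReal :=
  ⨆ r : ℝ, (((p * r : ℝ) : EReal) - g r)

/-- Convexity of an `EReal`-valued function on a subset of `ℝ`. -/
def ERealConvexOn (s : Set ℝ) (h : ℝ → EReal) : Prop :=
  ∀ ⦃x⦄, x ∈ s → ∀ ⦃y⦄, y ∈ s → ∀ a b : ℝ≥0, a + b = 1 →
    h ((a : ℝ) * x + (b : ℝ) * y) ≤ ((a : ℝ) : EReal) * h x + ((b : ℝ) : EReal) * h y

/-- The largest convex minorant of an `EReal`-valued function on `ℝ`. -/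
def convMinE (g : ℝ → EReal) (x : ℝ) : EReal :=
  ⨆ h ∈ {h : ℝ → EReal | ERealConvexOn Set.univ h ∧ ∀ y, h y ≤ g y}, h x

/-! ### EReal helper lemmas -/

lemma er_flip1 {x y : ℝ} {z : EReal} (h : ((x - y : ℝ) : EReal) ≤ z) :
    (x : EReal) - z ≤ (y : EReal) := by
  induction z using EReal.rec with
  | bot => exact absurd (le_bot_iff.1 h) (EReal.coe_ne_bot _)
  | coe z =>
    rw [← EReal.coe_sub, EReal.coe_le_coe_iff]
    rw [EReal.coe_le_coe_iff] at h
    linarith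
  | top => rw [EReal.sub_top]; exact bot_le

lemma er_flip2 {x y : ℝ} {z : EReal} (hz : z ≠ ⊥) (h : (x : EReal) - z ≤ (y : EReal)) :
    ((x - y : ℝ) : EReal) ≤ z := by
  induction z using EReal.rec with
  | bot => exact absurd rfl hz
  | coe z =>
    rw [← EReal.coe_sub, EReal.coe_le_coe_iff] at h
    rw [EReal.coe_le_coe_iff]
    linarith
  | top => exact le_top

lemma er_coe_mul_ne_top {a : ℝ} (ha : 0 ≤ a) {X : EReal} (hX : X ≠ ⊤) :
    (a : EReal) * X ≠ ⊤ := by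
  induction X using EReal.rec with
  | bot =>
    rcases eq_or_lt_of_le ha with h0 | h0
    · simp [← h0]
    · rw [EReal.coe_mul_bot_of_pos h0]; exact bot_ne_top
  | coe X => rw [← EReal.coe_mul]; exact EReal.coe_ne_top _
  | top => exact absurd rfl hX

lemma er_le_of_forall_lt {X Y : EReal} (h : ∀ t : ℝ, (t : EReal) < X → (t : EReal) ≤ Y) :
    X ≤ Y := by
  by_contra hc
  rcases EReal.exists_between_coe_real (not_le.1 hc) with ⟨t, hYt, htX⟩
  exact absurd (h t htX) (not_le.2 hYt)

/-- A lower semicontinuous `EReal`-valued function attains its minimum on a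
nonempty compact set. -/
lemma lsc_exists_min {X : Type*} [TopologicalSpace X] [T2Space X] {s : Set X}
    (hs : IsCompact s) (hne : s.Nonempty) {f : X → EReal}
    (hf : LowerSemicontinuous f) : ∃ a ∈ s, ∀ b ∈ s, f a ≤ f b := by
  set μ : EReal := ⨅ b ∈ s, f b with hμ
  rcases eq_or_lt_of_le (le_top : μ ≤ ⊤) with htop | hlt
  · refine ⟨hne.some, hne.some_mem, fun b hb => ?_⟩
    have : μ ≤ f b := iInf₂_le b hb
    calc f hne.some ≤ ⊤ := le_top
    _ = μ := htop.symm
    _ ≤ f b := this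
  · set ι := {y : EReal // μ < y}
    have hι : Nonempty ι := ⟨⟨⊤, hlt⟩⟩
    set C : ι → Set X := fun y => s ∩ {x | f x ≤ y.1} with hC
    have hCne : ∀ y : ι, (C y).Nonempty := by
      rintro ⟨y, hy⟩
      by_contra hemp
      have : ∀ x ∈ s, y ≤ f x := by
        intro x hx
        by_contra hxy
        exact hemp ⟨x, hx, le_of_lt (not_le.1 hxy)⟩
      exact absurd (le_iInf₂ this) (not_le.2 hy)
    have hCcl : ∀ y : ι, IsClosed (C y) :=
      fun y => hs.isClosed.inter (hf.isClosed_preimage y.1)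
    have hCc : ∀ y : ι, IsCompact (C y) :=
      fun y => hs.inter_right (hf.isClosed_preimage y.1)
    have hdir : Directed (· ⊇ ·) C := by
      rintro ⟨y, hy⟩ ⟨y', hy'⟩
      refine ⟨⟨min y y', lt_min hy hy'⟩, ?_, ?_⟩
      · rintro x ⟨hxs, hx⟩
        have hx' : f x ≤ min y y' := hx
        exact ⟨hxs, le_trans hx' (min_le_left y y')⟩
      · rintro x ⟨hxs, hx⟩
        have hx' : f x ≤ min y y' := hx
        exact ⟨hxs, le_trans hx' (min_le_right y y')⟩
    obtain ⟨a, ha⟩ := IsCompact.nonempty_iInter_of_directed_nonempty_isCompact_isClosed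
      C hdir hCne hCc hCcl
    have has : a ∈ s := (mem_iInter.1 ha ⟨⊤, hlt⟩).1
    refine ⟨a, has, fun b hb => ?_⟩
    have hfa : f a ≤ μ := by
      by_contra hcon
      rcases exists_between (not_le.1 hcon) with ⟨y, hy1, hy2⟩
      exact absurd (mem_iInter.1 ha ⟨y, hy1⟩).2 (not_le.2 hy2)
    exact hfa.trans (iInf₂_le b hb)

/-! ### Basic facts about `F` and its conjugate -/

lemma ed_exists_unit {d : ℕ} (hd : 0 < d) : ∃ ℓ : Ed d, ‖ℓ‖ = 1 := by
  refine ⟨EuclideanSpace.single ⟨0, hd⟩ (1 : ℝ), ?_⟩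
  rw [EuclideanSpace.norm_single]
  norm_num

lemma ed_exists_unit_smul {d : ℕ} (hd : 0 < d) (v : Ed d) :
    ∃ ℓ : Ed d, ‖ℓ‖ = 1 ∧ ‖v‖ • ℓ = v := by
  rcases eq_or_ne v 0 with rfl | hv
  · rcases ed_exists_unit hd with ⟨ℓ, hℓ⟩
    exact ⟨ℓ, hℓ, by simp⟩
  · refine ⟨‖v‖⁻¹ • v, ?_, ?_⟩
    · rw [norm_smul, norm_inv, norm_norm, inv_mul_cancel₀ (norm_ne_zero_iff.2 hv)]
    · rw [smul_smul, mul_inv_cancel₀ (norm_ne_zero_iff.2 hv), one_smul]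

lemma fy_le_conjE {d : ℕ} (F : Ed d → ℝ) (u v : Ed d) :
    ((⟪u, v⟫ - F u : ℝ) : EReal) ≤ conjE F v :=
  le_iSup (fun u : Ed d => ((⟪u, v⟫ - F u : ℝ) : EReal)) u

lemma conjE_ne_bot {d : ℕ} (F : Ed d → ℝ) (v : Ed d) : conjE F v ≠ ⊥ := by
  intro h
  have := fy_le_conjE F 0 v
  rw [h, le_bot_iff] at this
  exact EReal.coe_ne_bot _ this

lemma conjE_ge {d : ℕ} (F : Ed d → ℝ) (v : Ed d) :
    ((-F 0 : ℝ) : EReal) ≤ conjE F v := by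
  have := fy_le_conjE F 0 v
  simpa using this

/-- Subgradient existence for a finite convex function on `ℝ^d`. -/
lemma exists_subgrad {d : ℕ} (F : Ed d → ℝ) (hF : ConvexOn ℝ Set.univ F)
    (u₀ : Ed d) : ∃ v : Ed d, ∀ w, F u₀ + ⟪v, w - u₀⟫ ≤ F w := by
  have hFc : Continuous F := by
    rw [← continuousOn_univ]
    exact hF.continuousOn isOpen_univ
  set s : Set (Ed d × ℝ) := {q | F q.1 < q.2} with hs
  have hso : IsOpen s := isOpen_lt (hFc.comp continuous_fst) continuous_snd
  have hsc : Convex ℝ s := by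
    rintro ⟨x₁, t₁⟩ h₁ ⟨x₂, t₂⟩ h₂ a b ha hb hab
    simp only [hs, mem_setOf_eq] at h₁ h₂ ⊢
    rcases eq_or_lt_of_le ha with rfl | ha'
    · simpa [zero_add, (by linarith : b = 1)] using h₂
    rcases eq_or_lt_of_le hb with rfl | hb'
    · simpa [(by linarith : a = 1)] using h₁
    calc F (a • x₁ + b • x₂) ≤ a * F x₁ + b * F x₂ :=
          hF.2 (mem_univ x₁) (mem_univ x₂) ha hb hab
    _ < a * t₁ + b * t₂ := by
        apply add_lt_add
        · exact mul_lt_mul_of_pos_left h₁ ha'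
        · exact mul_lt_mul_of_pos_left h₂ hb'
  have hx₀ : ((u₀, F u₀) : Ed d × ℝ) ∉ s := by simp [hs]
  obtain ⟨f, hf⟩ := geometric_hahn_banach_point_open hsc hso hx₀
  set c : ℝ := f (0, 1) with hc
  have hdecomp : ∀ (w : Ed d) (t : ℝ), f (w, t) = f (w, 0) + t * c := by
    intro w t
    have : (w, t) = (w, (0 : ℝ)) + t • ((0 : Ed d), (1 : ℝ)) := by
      simp [Prod.ext_iff]
    rw [this, map_add, map_smul, smul_eq_mul, hc]
  have hcpos : 0 < c := by
    have h1 := hf (u₀, F u₀ + 1) (by simp [hs])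
    rw [hdecomp u₀ (F u₀ + 1), hdecomp u₀ (F u₀)] at h1
    nlinarith
  have hkey : ∀ w : Ed d, f (u₀, 0) + F u₀ * c ≤ f (w, 0) + F w * c := by
    intro w
    by_contra hcon
    push_neg at hcon
    set t : ℝ := (f (u₀, 0) + F u₀ * c - f (w, 0)) / c with ht
    have htgt : F w < t := by
      rw [ht, lt_div_iff₀ hcpos]; linarith
    have := hf (w, t) htgt
    rw [hdecomp w t, hdecomp u₀ (F u₀), ht, div_mul_cancel₀ _ (ne_of_gt hcpos)] at this
    linarith
  set φ : Ed d →L[ℝ] ℝ := f.comp (ContinuousLinearMap.inl ℝ (Ed d) ℝ) with hφ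
  have hφval : ∀ w : Ed d, φ w = f (w, 0) := fun w => rfl
  set v : Ed d := -(c⁻¹) • (InnerProductSpace.toDual ℝ (Ed d)).symm φ with hv
  refine ⟨v, fun w => ?_⟩
  have hinner : ⟪v, w - u₀⟫ = -(c⁻¹) * (f (w - u₀, 0)) := by
    rw [hv, real_inner_smul_left, InnerProductSpace.toDual_symm_apply, hφval]
  have hfsub : f ((w - u₀ : Ed d), (0 : ℝ)) = f (w, 0) - f (u₀, 0) := by
    have : ((w - u₀ : Ed d), (0 : ℝ)) = (w, (0:ℝ)) - (u₀, (0:ℝ)) := by simp [Prod.ext_iff]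
    rw [this, map_sub]
  rw [hinner, hfsub]
  have hk := hkey w
  have hinv : (0:ℝ) < c⁻¹ := inv_pos.2 hcpos
  have h3 : (F u₀ - F w) * c ≤ f (w, 0) - f (u₀, 0) := by linarith
  have h4 := mul_le_mul_of_nonneg_left h3 (le_of_lt hinv)
  have h5 : c⁻¹ * ((F u₀ - F w) * c) = F u₀ - F w := by field_simp
  nlinarith

/-- The gradient at `0` is a subgradient. -/
lemma grad_subgrad {d : ℕ} (F : Ed d → ℝ) (hF : ConvexOn ℝ Set.univ F)
    (m : Ed d) (hm : HasGradientAt F m 0) : ∀ w, F 0 + ⟪m, w⟫ ≤ F w := by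
  intro w
  set φ : ℝ → ℝ := fun t => F (t • w) with hφ
  have hφconv : ConvexOn ℝ Set.univ φ := by
    refine ⟨convex_univ, fun x _ y _ a b ha hb hab => ?_⟩
    simp only [hφ, smul_eq_mul]
    have hcomb : (a * x + b * y) • w = a • (x • w) + b • (y • w) := by
      rw [add_smul, smul_smul, smul_smul]
    rw [hcomb]
    exact hF.2 (mem_univ _) (mem_univ _) ha hb hab
  have hderiv : HasDerivAt φ ⟪m, w⟫ 0 := by
    have h1 : HasDerivAt (fun t : ℝ => t • w) w 0 := by
      simpa using (hasDerivAt_id (0:ℝ)).smul_const w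
    have h2 : HasFDerivAt F ((InnerProductSpace.toDual ℝ (Ed d)) m) ((0:ℝ) • w) := by
      rw [zero_smul]; exact hm.hasFDerivAt
    have h3 := h2.comp_hasDerivAt (0:ℝ) h1
    have h4 : HasDerivAt φ ((InnerProductSpace.toDual ℝ (Ed d)) m w) 0 := h3
    simpa [InnerProductSpace.toDual_apply_apply] using h4
  have hslope : Tendsto (slope φ 0) (𝓝[>] 0) (𝓝 ⟪m, w⟫) := by
    have := hasDerivAt_iff_tendsto_slope.1 hderiv
    exact this.mono_left (nhdsWithin_mono 0 (fun x hx => ne_of_gt hx))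
  have hbound : ∀ᶠ t in 𝓝[>] (0:ℝ), slope φ 0 t ≤ φ 1 - φ 0 := by
    filter_upwards [Ioo_mem_nhdsGT (by norm_num : (0:ℝ) < 1)] with t ht
    have h01 : slope φ 0 1 = φ 1 - φ 0 := by simp [slope_def_field]
    rw [← h01]
    have := hφconv.secant_mono (mem_univ (0:ℝ)) (mem_univ t) (mem_univ 1)
      (ne_of_gt ht.1) (by norm_num) (le_of_lt ht.2)
    simpa [slope_def_field] using this
  have hle : ⟪m, w⟫ ≤ φ 1 - φ 0 := le_of_tendsto hslope hbound
  have : φ 1 = F w := by simp [hφ]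
  have h0 : φ 0 = F 0 := by simp [hφ]
  rw [this, h0] at hle
  linarith

lemma conjE_of_subgrad {d : ℕ} (F : Ed d → ℝ) {u₀ v : Ed d}
    (h : ∀ w, F u₀ + ⟪v, w - u₀⟫ ≤ F w) :
    conjE F v = ((⟪u₀, v⟫ - F u₀ : ℝ) : EReal) := by
  refine le_antisymm (iSup_le fun u => ?_) (fy_le_conjE F u₀ v)
  rw [EReal.coe_le_coe_iff]
  have := h u
  have hi : ⟪v, u - u₀⟫ = ⟪u, v⟫ - ⟪u₀, v⟫ := by
    rw [inner_sub_right, real_inner_comm v u, real_inner_comm v u₀]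
  linarith [this, hi.symm.le]

lemma conjE_at_m {d : ℕ} (F : Ed d → ℝ) (hF : ConvexOn ℝ Set.univ F)
    (m : Ed d) (hm : HasGradientAt F m 0) :
    conjE F m = ((-F 0 : ℝ) : EReal) := by
  have h := conjE_of_subgrad F (u₀ := 0) (v := m) (fun w => by
    simpa using grad_subgrad F hF m hm w)
  simpa using h

/-! ### Facts about `barE` -/

lemma sphere_eq {d : ℕ} : {ℓ : Ed d | ‖ℓ‖ = 1} = Metric.sphere (0 : Ed d) 1 := by
  ext ℓ; simp [Metric.mem_sphere, dist_eq_norm]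

lemma barE_bddAbove {d : ℕ} (F : Ed d → ℝ) (hF : ConvexOn ℝ Set.univ F) (p : ℝ) :
    BddAbove ((fun ℓ : Ed d => F (p • ℓ)) '' {ℓ : Ed d | ‖ℓ‖ = 1}) := by
  have hFc : Continuous F := by
    rw [← continuousOn_univ]; exact hF.continuousOn isOpen_univ
  have hcomp : IsCompact {ℓ : Ed d | ‖ℓ‖ = 1} := by
    rw [sphere_eq]; exact isCompact_sphere 0 1
  exact (hcomp.image (hFc.comp (continuous_const_smul p))).bddAbove

lemma le_barE {d : ℕ} (F : Ed d → ℝ) (hF : ConvexOn ℝ Set.univ F) (p : ℝ)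
    {ℓ : Ed d} (hℓ : ‖ℓ‖ = 1) : F (p • ℓ) ≤ barE F p :=
  le_csSup (barE_bddAbove F hF p) (mem_image_of_mem _ hℓ)

lemma barE_le {d : ℕ} (hd : 0 < d) (F : Ed d → ℝ) {p A : ℝ}
    (h : ∀ ℓ : Ed d, ‖ℓ‖ = 1 → F (p • ℓ) ≤ A) : barE F p ≤ A := by
  rcases ed_exists_unit hd with ⟨ℓ₀, hℓ₀⟩
  refine csSup_le ⟨F (p • ℓ₀), mem_image_of_mem _ hℓ₀⟩ ?_
  rintro x ⟨ℓ, hℓ, rfl⟩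
  exact h ℓ hℓ

lemma barE_zero {d : ℕ} (hd : 0 < d) (F : Ed d → ℝ) (hF : ConvexOn ℝ Set.univ F) :
    barE F 0 = F 0 := by
  rcases ed_exists_unit hd with ⟨ℓ₀, hℓ₀⟩
  refine le_antisymm (barE_le hd F fun ℓ hℓ => by simp) ?_
  simpa using le_barE F hF 0 hℓ₀

lemma F0_le_barE {d : ℕ} (hd : 0 < d) (F : Ed d → ℝ) (hF : ConvexOn ℝ Set.univ F)
    (p : ℝ) : F 0 ≤ barE F p := by
  rcases ed_exists_unit hd with ⟨ℓ₀, hℓ₀⟩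
  have hneg : ‖-ℓ₀‖ = 1 := by rwa [norm_neg]
  have hmid : (0 : Ed d) = (1/2 : ℝ) • (p • ℓ₀) + (1/2 : ℝ) • (p • -ℓ₀) := by
    rw [smul_neg, smul_neg, ← sub_eq_add_neg, sub_self]
  have := hF.2 (mem_univ (p • ℓ₀)) (mem_univ (p • -ℓ₀))
    (by norm_num : (0:ℝ) ≤ 1/2) (by norm_num : (0:ℝ) ≤ 1/2) (by norm_num)
  rw [← hmid] at this
  simp only [smul_eq_mul] at this
  have h1 := le_barE F hF p hℓ₀
  have h2 := le_barE F hF p hneg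
  linarith

lemma barE_mono {d : ℕ} (hd : 0 < d) (F : Ed d → ℝ) (hF : ConvexOn ℝ Set.univ F) :
    MonotoneOn (barE F) (Set.Ici 0) := by
  rintro p (hp : (0:ℝ) ≤ p) q (hq : (0:ℝ) ≤ q) hpq
  rcases eq_or_lt_of_le hq with rfl | hq'
  · rw [le_antisymm hpq hp]
  refine barE_le hd F fun ℓ hℓ => ?_
  have hcomb : p • ℓ = (1 - p/q) • ((0:ℝ) • ℓ) + (p/q) • (q • ℓ) := by
    rw [zero_smul, smul_zero, zero_add, smul_smul]
    rw [div_mul_cancel₀ _ (ne_of_gt hq')]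
  have hmem : (0:ℝ) ≤ p/q := div_nonneg hp (le_of_lt hq')
  have hmem2 : (0:ℝ) ≤ 1 - p/q := by
    rw [sub_nonneg, div_le_one hq']; exact hpq
  have := hF.2 (mem_univ ((0:ℝ) • ℓ)) (mem_univ (q • ℓ)) hmem2 hmem (by ring)
  rw [← hcomb] at this
  have h1 : F ((0:ℝ) • ℓ) = F 0 := by rw [zero_smul]
  have h2 := F0_le_barE hd F hF q
  have h3 := le_barE F hF q hℓ
  calc F (p • ℓ) ≤ (1 - p/q) * F ((0:ℝ) • ℓ) + (p/q) * F (q • ℓ) := this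
  _ ≤ (1 - p/q) * barE F q + (p/q) * barE F q := by
      apply add_le_add
      · apply mul_le_mul_of_nonneg_left _ hmem2; rw [h1]; exact h2
      · exact mul_le_mul_of_nonneg_left h3 hmem
  _ = barE F q := by ring

lemma barE_convex {d : ℕ} (hd : 0 < d) (F : Ed d → ℝ) (hF : ConvexOn ℝ Set.univ F) :
    ConvexOn ℝ (Set.Ici 0) (barE F) := by
  refine ⟨convex_Ici 0, fun x _ y _ a b ha hb hab => ?_⟩
  simp only [smul_eq_mul]
  refine barE_le hd F fun ℓ hℓ => ?_
  have hcomb : (a * x + b * y) • ℓ = a • (x • ℓ) + b • (y • ℓ) := by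
    rw [add_smul, smul_smul, smul_smul]
  rw [hcomb]
  calc F (a • (x • ℓ) + b • (y • ℓ)) ≤ a * F (x • ℓ) + b * F (y • ℓ) :=
        hF.2 (mem_univ _) (mem_univ _) ha hb hab
  _ ≤ a * barE F x + b * barE F y := by
      apply add_le_add
      · exact mul_le_mul_of_nonneg_left (le_barE F hF x hℓ) ha
      · exact mul_le_mul_of_nonneg_left (le_barE F hF y hℓ) hb

/-! ### Facts about `g = ubarE (conjE F)` -/

lemma ubarE_of_neg {d : ℕ} (G : Ed d → EReal) {r : ℝ} (hr : r < 0) :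
    ubarE G r = ⊤ := if_pos hr

lemma ubarE_of_nonneg {d : ℕ} (G : Ed d → EReal) {r : ℝ} (hr : 0 ≤ r) :
    ubarE G r = ⨅ ℓ ∈ {ℓ : Ed d | ‖ℓ‖ = 1}, G (r • ℓ) := if_neg (not_lt.2 hr)

lemma g_ge {d : ℕ} (F : Ed d → ℝ) (r : ℝ) :
    ((-F 0 : ℝ) : EReal) ≤ ubarE (conjE F) r := by
  rcases lt_or_ge r 0 with hr | hr
  · rw [ubarE_of_neg _ hr]; exact le_top
  · rw [ubarE_of_nonneg _ hr]
    exact le_iInf₂ fun ℓ _ => conjE_ge F (r • ℓ)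

lemma g_ne_bot {d : ℕ} (F : Ed d → ℝ) (r : ℝ) : ubarE (conjE F) r ≠ ⊥ := by
  intro h
  have := g_ge F r
  rw [h, le_bot_iff] at this
  exact EReal.coe_ne_bot _ this

lemma g_le_at_norm {d : ℕ} (hd : 0 < d) (F : Ed d → ℝ) (v : Ed d) :
    ubarE (conjE F) ‖v‖ ≤ conjE F v := by
  rcases ed_exists_unit_smul hd v with ⟨ℓ, hℓ, hsmul⟩
  rw [ubarE_of_nonneg _ (norm_nonneg v)]
  calc (⨅ ℓ' ∈ {ℓ' : Ed d | ‖ℓ'‖ = 1}, conjE F (‖v‖ • ℓ')) ≤ conjE F (‖v‖ • ℓ) :=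
        iInf₂_le ℓ hℓ
  _ = conjE F v := by rw [hsmul]

/-! ### Part (ii) -/

theorem partII {d : ℕ} (hd : 0 < d) (F : Ed d → ℝ) (hF : ConvexOn ℝ Set.univ F)
    {p : ℝ} (hp : 0 ≤ p) :
    conj1E (ubarE (conjE F)) p = (barE F p : EReal) := by
  refine le_antisymm (iSup_le fun r => ?_) ?_
  · rcases lt_or_ge r 0 with hr | hr
    · rw [ubarE_of_neg _ hr, EReal.sub_top]; exact bot_le
    · apply er_flip1
      rw [ubarE_of_nonneg _ hr]
      refine le_iInf₂ fun ℓ hℓ => ?_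
      refine le_trans ?_ (fy_le_conjE F (p • ℓ) (r • ℓ))
      rw [EReal.coe_le_coe_iff]
      have hinner : ⟪p • ℓ, r • ℓ⟫ = p * r := by
        rw [real_inner_smul_left, real_inner_smul_right, real_inner_self_eq_norm_sq, hℓ]
        ring
      rw [hinner]
      have := le_barE F hF p hℓ
      linarith
  · -- `barE F p ≤ conj1E g p`
    have core : ∀ ℓ : Ed d, ‖ℓ‖ = 1 → (F (p • ℓ) : EReal) ≤ conj1E (ubarE (conjE F)) p := by
      intro ℓ hℓ
      obtain ⟨v, hv⟩ := exists_subgrad F hF (p • ℓ)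
      have hterm : ((p * ‖v‖ : ℝ) : EReal) - ubarE (conjE F) ‖v‖ ≤
          conj1E (ubarE (conjE F)) p :=
        le_iSup (fun r : ℝ => ((p * r : ℝ) : EReal) - ubarE (conjE F) r) ‖v‖
      refine le_trans ?_ hterm
      have h1 : ((p * ‖v‖ : ℝ) : EReal) - conjE F v ≤
          ((p * ‖v‖ : ℝ) : EReal) - ubarE (conjE F) ‖v‖ :=
        EReal.sub_le_sub (le_refl _) (g_le_at_norm hd F v)
      refine le_trans ?_ h1
      rw [conjE_of_subgrad F hv, ← EReal.coe_sub, EReal.coe_le_coe_iff]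
      have hinner : ⟪p • ℓ, v⟫ = p * ⟪ℓ, v⟫ := real_inner_smul_left ℓ v p
      have hcs : ⟪ℓ, v⟫ ≤ ‖v‖ := by
        have := real_inner_le_norm ℓ v
        rwa [hℓ, one_mul] at this
      have := mul_le_mul_of_nonneg_left hcs hp
      linarith [hinner]
    apply er_le_of_forall_lt
    intro t ht
    rw [EReal.coe_lt_coe_iff] at ht
    obtain ⟨x, hx, htx⟩ := exists_lt_of_lt_csSup
      (by rcases ed_exists_unit hd with ⟨ℓ₀, hℓ₀⟩
          exact ⟨F (p • ℓ₀), mem_image_of_mem _ hℓ₀⟩) ht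
    obtain ⟨ℓ, hℓ, rfl⟩ := hx
    exact le_trans (EReal.coe_le_coe_iff.2 (le_of_lt htx)) (core ℓ hℓ)

/-! ### Part (iii): easy direction -/

lemma conjE_lsc {d : ℕ} (F : Ed d → ℝ) : LowerSemicontinuous (conjE F) := by
  apply lowerSemicontinuous_iSup
  intro u
  apply Continuous.lowerSemicontinuous
  exact continuous_coe_real_ereal.comp
    ((continuous_const.inner continuous_id).sub continuous_const)

lemma R_le_g {d : ℕ} (hd : 0 < d) (F : Ed d → ℝ) (hF : ConvexOn ℝ Set.univ F) (y : ℝ) :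
    (⨆ p ∈ Set.Ici (0 : ℝ), ((p * y - barE F p : ℝ) : EReal)) ≤ ubarE (conjE F) y := by
  refine iSup₂_le fun p hp => ?_
  refine er_flip2 (g_ne_bot F y) ?_
  calc ((p * y : ℝ) : EReal) - ubarE (conjE F) y ≤ conj1E (ubarE (conjE F)) p :=
        le_iSup (fun s : ℝ => ((p * s : ℝ) : EReal) - ubarE (conjE F) s) y
  _ = ((barE F p : ℝ) : EReal) := partII hd F hF hp

lemma R_convex {d : ℕ} (F : Ed d → ℝ) :
    ERealConvexOn Set.univ
      (fun x => ⨆ p ∈ Set.Ici (0 : ℝ), ((p * x - barE F p : ℝ) : EReal)) := by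
  intro x _ y _ a b hab
  have hab' : (a : ℝ) + (b : ℝ) = 1 := by exact_mod_cast congrArg NNReal.toReal hab
  refine iSup₂_le fun p hp => ?_
  have hkey : (p * ((a : ℝ) * x + (b : ℝ) * y) - barE F p : ℝ) =
      (a : ℝ) * (p * x - barE F p) + (b : ℝ) * (p * y - barE F p) := by
    linear_combination (barE F p) * hab'
  rw [hkey, EReal.coe_add, EReal.coe_mul, EReal.coe_mul]
  apply add_le_add
  · apply mul_le_mul_of_nonneg_left _ (by exact_mod_cast a.2 : (0:EReal) ≤ (a:ℝ))
    exact le_iSup₂ (f := fun (p : ℝ) (_ : p ∈ Set.Ici (0:ℝ)) =>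
      ((p * x - barE F p : ℝ) : EReal)) p hp
  · apply mul_le_mul_of_nonneg_left _ (by exact_mod_cast b.2 : (0:EReal) ≤ (b:ℝ))
    exact le_iSup₂ (f := fun (p : ℝ) (_ : p ∈ Set.Ici (0:ℝ)) =>
      ((p * y - barE F p : ℝ) : EReal)) p hp

/-! ### Part (iii): hard direction -/

lemma partIII_hard {d : ℕ} (hd : 0 < d) (F : Ed d → ℝ) (hF : ConvexOn ℝ Set.univ F)
    (m : Ed d) (hm : HasGradientAt F m 0) {r : ℝ} (hr : ‖m‖ ≤ r) :
    convMinE (ubarE (conjE F)) r ≤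
      ⨆ p ∈ Set.Ici (0 : ℝ), ((p * r - barE F p : ℝ) : EReal) := by
  set g : ℝ → EReal := ubarE (conjE F) with hg
  set c : ℝ := -F 0 with hc
  have hgc : ∀ s, ((c : ℝ) : EReal) ≤ g s := fun s => g_ge F s
  have hgs0 : g ‖m‖ ≤ ((c : ℝ) : EReal) := by
    calc g ‖m‖ ≤ conjE F m := g_le_at_norm hd F m
    _ = ((c : ℝ) : EReal) := conjE_at_m F hF m hm
  refine iSup₂_le fun h hh => ?_
  obtain ⟨hconv, hle⟩ := hh
  apply er_le_of_forall_lt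
  intro t ht
  have main : ∀ p : ℝ, 0 ≤ p → (∀ s : ℝ, ((t + p * (s - r) : ℝ) : EReal) ≤ g s) →
      (t : EReal) ≤ ⨆ p ∈ Set.Ici (0 : ℝ), ((p * r - barE F p : ℝ) : EReal) := by
    intro p hp hline
    have h1 : conj1E g p ≤ ((p * r - t : ℝ) : EReal) := by
      refine iSup_le fun s => ?_
      apply er_flip1
      have he : (p * s - (p * r - t) : ℝ) = t + p * (s - r) := by ring
      rw [he]
      exact hline s
    rw [hg, partII hd F hF hp, EReal.coe_le_coe_iff] at h1
    have h2 : t ≤ p * r - barE F p := by linarith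
    refine le_trans (EReal.coe_le_coe_iff.2 h2) ?_
    exact le_iSup₂ (f := fun (p : ℝ) (_ : p ∈ Set.Ici (0:ℝ)) =>
      ((p * r - barE F p : ℝ) : EReal)) p hp
  by_cases hct : t ≤ c
  · refine main 0 le_rfl fun s => ?_
    have he : (t + 0 * (s - r) : ℝ) = t := by ring
    rw [he]
    exact le_trans (EReal.coe_le_coe_iff.2 hct) (hgc s)
  push_neg at hct
  have hs0r : ‖m‖ < r := by
    rcases eq_or_lt_of_le hr with heq | hlt
    · exfalso
      have h1 : h r ≤ ((c : ℝ) : EReal) := le_trans (hle r) (by rw [← heq]; exact hgs0)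
      have h2 := lt_of_lt_of_le ht h1
      rw [EReal.coe_lt_coe_iff] at h2
      linarith
    · exact hlt
  have hgr : (t : EReal) < g r := lt_of_lt_of_le ht (hle r)
  by_cases hex : ∃ s₁, r < s₁ ∧ g s₁ ≠ ⊤
  · -- Case 2a : there is a point of the domain of `g` beyond `r`
    obtain ⟨s₁, hrs₁, hgs₁⟩ := hex
    set s₀ : ℝ := ‖m‖ with hs₀def
    set k : ℝ → EReal := fun s => max (h s) ((c : ℝ) : EReal) with hk
    have hkconv : ERealConvexOn Set.univ k := by
      intro x _ y _ a b hab
      have hab' : (a : ℝ) + (b : ℝ) = 1 := by exact_mod_cast congrArg NNReal.toReal hab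
      have hna : (0 : EReal) ≤ ((a : ℝ) : EReal) := by exact_mod_cast a.2
      have hnb : (0 : EReal) ≤ ((b : ℝ) : EReal) := by exact_mod_cast b.2
      have hcc : ((a : ℝ) : EReal) * ((c : ℝ) : EReal) + ((b : ℝ) : EReal) * ((c : ℝ) : EReal)
          = ((c : ℝ) : EReal) := by
        rw [← EReal.coe_mul, ← EReal.coe_mul, ← EReal.coe_add]
        norm_cast
        linear_combination c * hab'
      refine max_le ?_ ?_
      · refine le_trans (hconv (mem_univ x) (mem_univ y) a b hab) ?_
        exact add_le_add (mul_le_mul_of_nonneg_left (le_max_left _ _) hna)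
          (mul_le_mul_of_nonneg_left (le_max_left _ _) hnb)
      · rw [← hcc]
        exact add_le_add (mul_le_mul_of_nonneg_left (le_max_right _ _) hna)
          (mul_le_mul_of_nonneg_left (le_max_right _ _) hnb)
    have hkle : ∀ s, k s ≤ g s := fun s => max_le (hle s) (hgc s)
    have hknebot : ∀ s, k s ≠ ⊥ :=
      fun s => (lt_of_lt_of_le (EReal.bot_lt_coe c) (le_max_right _ _)).ne'
    have hks₀ : k s₀ = ((c : ℝ) : EReal) :=
      le_antisymm (max_le (le_trans (hle s₀) hgs0) le_rfl) (le_max_right _ _)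
    have hks₁top : k s₁ ≠ ⊤ := fun htop => hgs₁ (top_le_iff.1 (htop ▸ hkle s₁))
    have hkmid : ∀ x z s : ℝ, x ≤ s → s ≤ z → k x ≠ ⊤ → k z ≠ ⊤ → k s ≠ ⊤ := by
      intro x z s hxs hsz hx hz
      rcases eq_or_lt_of_le (hxs.trans hsz) with heq | hxz
      · have hsx : s = x := le_antisymm (heq ▸ hsz) hxs
        rw [hsx]; exact hx
      · set a : ℝ := (z - s) / (z - x) with ha'
        set b : ℝ := (s - x) / (z - x) with hb'
        have hzx : (0:ℝ) < z - x := by linarith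
        have ha : 0 ≤ a := div_nonneg (by linarith) hzx.le
        have hb : 0 ≤ b := div_nonneg (by linarith) hzx.le
        have hab : a + b = 1 := by rw [ha', hb']; field_simp; ring
        have hcomb : a * x + b * z = s := by rw [ha', hb']; field_simp; ring
        have hcv := hkconv (mem_univ x) (mem_univ z) (NNReal.mk a ha) (NNReal.mk b hb)
          (by rw [← NNReal.coe_inj, NNReal.coe_add, NNReal.coe_one]; exact hab)
        simp only [NNReal.coe_mk] at hcv
        rw [hcomb] at hcv
        intro htop
        rw [htop] at hcv
        exact (EReal.add_lt_top (er_coe_mul_ne_top ha hx) (er_coe_mul_ne_top hb hz)).ne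
          (top_le_iff.1 hcv)
    set κ : ℝ → ℝ := fun s => (k s).toReal with hκ
    have hκeq : ∀ {s : ℝ}, k s ≠ ⊤ → k s = ((κ s : ℝ) : EReal) :=
      fun {s} hs => (EReal.coe_toReal hs (hknebot s)).symm
    have slope3 : ∀ x y z : ℝ, x < y → y < z → k x ≠ ⊤ → k z ≠ ⊤ →
        (κ y - κ x) / (y - x) ≤ (κ z - κ y) / (z - y) := by
      intro x y z hxy hyz hx hz
      have hy : k y ≠ ⊤ := hkmid x z y hxy.le hyz.le hx hz
      have hzx : (0:ℝ) < z - x := by linarith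
      set a : ℝ := (z - y) / (z - x) with ha'
      set b : ℝ := (y - x) / (z - x) with hb'
      have ha : 0 ≤ a := div_nonneg (by linarith) hzx.le
      have hb : 0 ≤ b := div_nonneg (by linarith) hzx.le
      have hab : a + b = 1 := by rw [ha', hb']; field_simp; ring
      have hcomb : a * x + b * z = y := by rw [ha', hb']; field_simp; ring
      have hcv := hkconv (mem_univ x) (mem_univ z) (NNReal.mk a ha) (NNReal.mk b hb)
        (by rw [← NNReal.coe_inj, NNReal.coe_add, NNReal.coe_one]; exact hab)
      simp only [NNReal.coe_mk] at hcv
      rw [hcomb, hκeq hy, hκeq hx, hκeq hz, ← EReal.coe_mul, ← EReal.coe_mul,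
        ← EReal.coe_add, EReal.coe_le_coe_iff] at hcv
      rw [div_le_div_iff₀ (by linarith) (by linarith)]
      have hmul := mul_le_mul_of_nonneg_right hcv hzx.le
      have hexp : (a * κ x + b * κ z) * (z - x) = (z - y) * κ x + (y - x) * κ z := by
        rw [ha', hb']; field_simp
      rw [hexp] at hmul
      nlinarith [hmul]
    have hs₀top : k s₀ ≠ ⊤ := by rw [hks₀]; exact EReal.coe_ne_top c
    have hkr : k r ≠ ⊤ := hkmid s₀ s₁ r hs0r.le hrs₁.le hs₀top hks₁top
    have hκr : t < κ r := by
      have h1 : (t : EReal) < k r := lt_of_lt_of_le ht (le_max_left _ _)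
      rw [hκeq hkr, EReal.coe_lt_coe_iff] at h1
      exact h1
    have hκs₀ : κ s₀ = c := by
      show (k s₀).toReal = c
      rw [hks₀]; exact EReal.toReal_coe c
    set Sl : Set ℝ := (fun s => (κ r - κ s) / (r - s)) '' (Set.Ico s₀ r) with hSl
    have hSlne : Sl.Nonempty := ⟨_, mem_image_of_mem _ (⟨le_rfl, hs0r⟩ : s₀ ∈ Set.Ico s₀ r)⟩
    have hSlbdd : BddAbove Sl := by
      refine ⟨(κ s₁ - κ r) / (s₁ - r), ?_⟩
      rintro x ⟨s, hs, rfl⟩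
      have hstop : k s ≠ ⊤ := hkmid s₀ s₁ s hs.1 (hs.2.le.trans hrs₁.le) hs₀top hks₁top
      exact slope3 s r s₁ hs.2 hrs₁ hstop hks₁top
    set p : ℝ := sSup Sl with hpdef
    have hp₀ : (κ r - κ s₀) / (r - s₀) ≤ p :=
      le_csSup hSlbdd (mem_image_of_mem _ (⟨le_rfl, hs0r⟩ : s₀ ∈ Set.Ico s₀ r))
    have hppos : 0 < p := by
      refine lt_of_lt_of_le (div_pos ?_ (by linarith)) hp₀
      rw [hκs₀]; linarith
    refine main p hppos.le fun s => ?_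
    rcases lt_or_ge s s₀ with hss₀ | hss₀
    · -- s < s₀ : use the lower bound c
      have hline : t + p * (s - r) ≤ c := by
        have h1 : p * (s - r) ≤ p * (s₀ - r) :=
          mul_le_mul_of_nonneg_left (by linarith) hppos.le
        have h3 : p * (s₀ - r) ≤ κ s₀ - κ r := by
          have hrs : (0:ℝ) < r - s₀ := by linarith
          have h4 := mul_le_mul_of_nonneg_right hp₀ hrs.le
          rw [div_mul_cancel₀ _ (ne_of_gt hrs)] at h4
          nlinarith
        rw [hκs₀] at h3
        linarith
      exact le_trans (EReal.coe_le_coe_iff.2 hline) (hgc s)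
    rcases lt_trichotomy s r with hsr | heq | hsr
    · -- s ∈ [s₀, r)
      have hstop : k s ≠ ⊤ := hkmid s₀ s₁ s hss₀ (by linarith) hs₀top hks₁top
      have hsl : (κ r - κ s) / (r - s) ≤ p :=
        le_csSup hSlbdd (mem_image_of_mem _ (⟨hss₀, hsr⟩ : s ∈ Set.Ico s₀ r))
      have hκs : t + p * (s - r) ≤ κ s := by
        have hrs : (0:ℝ) < r - s := by linarith
        have h4 := mul_le_mul_of_nonneg_right hsl hrs.le
        rw [div_mul_cancel₀ _ (ne_of_gt hrs)] at h4
        nlinarith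
      calc ((t + p * (s - r) : ℝ) : EReal) ≤ ((κ s : ℝ) : EReal) :=
            EReal.coe_le_coe_iff.2 hκs
      _ = k s := (hκeq hstop).symm
      _ ≤ g s := hkle s
    · -- s = r
      have hstop : k s ≠ ⊤ := by rw [heq]; exact hkr
      have hκs : t + p * (s - r) ≤ κ s := by
        rw [heq, sub_self, mul_zero, add_zero]; exact hκr.le
      calc ((t + p * (s - r) : ℝ) : EReal) ≤ ((κ s : ℝ) : EReal) :=
            EReal.coe_le_coe_iff.2 hκs
      _ = k s := (hκeq hstop).symm
      _ ≤ g s := hkle s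
    · -- s > r
      by_cases hstop : k s = ⊤
      · have hgtop : g s = ⊤ := top_le_iff.1 (hstop ▸ hkle s)
        rw [hgtop]; exact le_top
      · have hslb : p ≤ (κ s - κ r) / (s - r) := by
          refine csSup_le hSlne ?_
          rintro x ⟨s', hs', rfl⟩
          have hs'top : k s' ≠ ⊤ := hkmid s₀ s₁ s' hs'.1 (hs'.2.le.trans hrs₁.le) hs₀top hks₁top
          exact slope3 s' r s hs'.2 hsr hs'top hstop
        have hκs : t + p * (s - r) ≤ κ s := by
          have hrs : (0:ℝ) < s - r := by linarith
          have h4 := mul_le_mul_of_nonneg_right hslb hrs.le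
          rw [div_mul_cancel₀ _ (ne_of_gt hrs)] at h4
          nlinarith
        calc ((t + p * (s - r) : ℝ) : EReal) ≤ ((κ s : ℝ) : EReal) :=
              EReal.coe_le_coe_iff.2 hκs
        _ = k s := (hκeq hstop).symm
        _ ≤ g s := hkle s
  · -- Case 2b : `g = ⊤` beyond `r`
    push_neg at hex
    have hr0 : 0 < r := lt_of_le_of_lt (norm_nonneg m) hs0r
    set K : Set (Ed d) := {v | ‖v‖ ≤ r ∧ conjE F v ≤ (t : EReal)} with hK
    have hKclosed : IsClosed K := by
      have h1 : IsClosed {v : Ed d | ‖v‖ ≤ r} := isClosed_le continuous_norm continuous_const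
      have h2 : IsClosed {v : Ed d | conjE F v ≤ (t : EReal)} :=
        (conjE_lsc F).isClosed_preimage _
      exact h1.inter h2
    have hKcompact : IsCompact K := by
      refine Metric.isCompact_of_isClosed_isBounded hKclosed ?_
      refine (Metric.isBounded_closedBall (x := (0 : Ed d)) (r := r)).subset ?_
      intro v hv
      rw [Metric.mem_closedBall, dist_zero_right]
      exact hv.1
    set A : Set ℝ := insert 0 ((fun v : Ed d => ‖v‖) '' K) with hA
    have hAcompact : IsCompact A := (hKcompact.image continuous_norm).insert 0
    have hAne : A.Nonempty := ⟨0, mem_insert _ _⟩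
    have hAlt : ∀ x ∈ A, x < r := by
      intro x hx
      rcases hx with rfl | ⟨v, hvK, rfl⟩
      · exact hr0
      rcases lt_or_eq_of_le hvK.1 with hlt | heq
      · exact hlt
      · exfalso
        obtain ⟨ℓ, hℓ, hsmul⟩ := ed_exists_unit_smul hd v
        have hgr2 : g r ≤ conjE F v := by
          rw [hg, ← heq, ubarE_of_nonneg _ (norm_nonneg v)]
          calc (⨅ ℓ' ∈ {ℓ' : Ed d | ‖ℓ'‖ = 1}, conjE F (‖v‖ • ℓ')) ≤ conjE F (‖v‖ • ℓ) :=
                iInf₂_le ℓ hℓ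
          _ = conjE F v := by rw [hsmul]
        exact absurd (lt_of_lt_of_le hgr (hgr2.trans hvK.2)) (lt_irrefl _)
    set b₀ : ℝ := sSup A with hb₀def
    have hb₀mem : b₀ ∈ A := hAcompact.sSup_mem hAne
    have hb₀lt : b₀ < r := hAlt _ hb₀mem
    set δ : ℝ := r - b₀ with hδdef
    have hδ : 0 < δ := by rw [hδdef]; linarith
    set p : ℝ := (t - c) / δ with hpdef
    have hppos : 0 < p := div_pos (by linarith) hδ
    refine main p hppos.le fun s => ?_
    rcases lt_or_ge s 0 with hs | hs
    · rw [hg, ubarE_of_neg _ hs]; exact le_top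
    rcases le_or_gt s r with hsr | hsr
    swap
    · rw [hex s hsr]; exact le_top
    by_cases hgs : g s ≤ (t : EReal)
    · -- points where `g ≤ t` are at distance ≥ δ from `r`
      have hsphc : IsCompact {ℓ : Ed d | ‖ℓ‖ = 1} := by
        rw [sphere_eq]; exact isCompact_sphere 0 1
      obtain ⟨ℓs, hℓs, hmin⟩ := lsc_exists_min hsphc (ed_exists_unit hd)
        (LowerSemicontinuous.comp (conjE_lsc F) (continuous_const_smul s))
      have hminle : conjE F (s • ℓs) ≤ g s := by
        rw [hg, ubarE_of_nonneg _ hs]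
        exact le_iInf₂ fun ℓ hℓ => hmin ℓ hℓ
      have hnorm : ‖s • ℓs‖ = s := by
        rw [norm_smul, hℓs, mul_one, Real.norm_eq_abs, abs_of_nonneg hs]
      have hvK : (s • ℓs) ∈ K := ⟨by rw [hnorm]; exact hsr, le_trans hminle hgs⟩
      have hsA : s ∈ A := by
        rw [hA]
        refine mem_insert_of_mem _ ⟨s • ℓs, hvK, hnorm⟩
      have hsb₀ : s ≤ b₀ := le_csSup hAcompact.bddAbove hsA
      have hline : t + p * (s - r) ≤ c := by
        have h1 : p * (s - r) ≤ p * (-δ) :=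
          mul_le_mul_of_nonneg_left (by rw [hδdef]; linarith) hppos.le
        have h2 : p * δ = t - c := by
          rw [hpdef, div_mul_cancel₀ _ (ne_of_gt hδ)]
        nlinarith
      exact le_trans (EReal.coe_le_coe_iff.2 hline) (hgc s)
    · push_neg at hgs
      have hps : p * (s - r) ≤ 0 :=
        mul_nonpos_of_nonneg_of_nonpos hppos.le (by linarith)
      have hline : t + p * (s - r) ≤ t := by linarith
      exact le_trans (EReal.coe_le_coe_iff.2 hline) hgs.le

/-- Let `F : ℝ^d → ℝ` (`d ≥ 1`) be convex, finite on all of `ℝ^d` and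
differentiable at `0` with `m = ∇F(0)`.  Then:
(i) `bar F` is increasing and convex on `[0, ∞)`;
(ii) `(ubar (F*))*(p) = bar F(p)` for all `p ≥ 0`;
(iii) for every `r ≥ |m|`, `(conv ubar (F*))(r) = (bar F)*(r)`, where `bar F(p) := +∞` for
`p < 0` (so the supremum in `(bar F)*` runs over `p ≥ 0`). -/
theorem radial_conjugacy_general
    {d : ℕ} (hd : 0 < d) (F : Ed d → ℝ)
    (hF : ConvexOn ℝ Set.univ F)
    (m : Ed d) (hm : HasGradientAt F m 0) :
    (MonotoneOn (barE F) (Set.Ici 0) ∧ ConvexOn ℝ (Set.Ici 0) (barE F)) ∧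
      (∀ p : ℝ, 0 ≤ p → conj1E (ubarE (conjE F)) p = (barE F p : EReal)) ∧
      (∀ r : ℝ, ‖m‖ ≤ r →
        convMinE (ubarE (conjE F)) r =
          ⨆ p ∈ Set.Ici (0 : ℝ), ((p * r - barE F p : ℝ) : EReal)) := by
  refine ⟨⟨barE_mono hd F hF, barE_convex hd F hF⟩,
    fun p hp => partII hd F hF hp, fun r hr => ?_⟩
  refine le_antisymm (partIII_hard hd F hF m hm hr) ?_
  exact le_iSup₂_of_le
    (fun x => ⨆ p ∈ Set.Ici (0 : ℝ), ((p * x - barE F p : ℝ) : EReal))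
    ⟨R_convex F, R_le_g hd F hF⟩ le_rfl

end
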